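/- Let β > 0 and u, v ∈ (0,1). The Hessian matrix H = [[-1/(4u(1-u)) + β/4, β/4],[β/4, -1/(4v(1-v)) + β/4]] has positive determinant if and only if u(1-u) + v(1-v) < 1/β. Moreover, if u(1-u) + v(1-v) < 1/β then also -1/(4u(1-u)) + β/4 < 0, so H is negative definite. -/

import Mathlib

lemma quad_pos_aux (A B C x y : ℝ) (hA : 0 < A) (hD : 0 < A * C - B^2)
    (hxy : x ≠ 0 ∨ y ≠ 0) : 0 < A * x^2 - 2 * B * x * y + C * y^2 := by
  rcases eq_or_ne y 0 with hy | hy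
  · subst hy
    have hx : x ≠ 0 := by tauto
    have := sq_pos_of_ne_zero hx
    nlinarith
  · have hy2 := sq_pos_of_ne_zero hy
    nlinarith [sq_nonneg (A * x - B * y), mul_pos hD hy2]

/-- Let `β > 0` and `u, v ∈ (0,1)`. The Hessian matrix
`H = [[-1/(4u(1-u)) + β/4, β/4], [β/4, -1/(4v(1-v)) + β/4]]` has positive determinant
iff `u(1-u) + v(1-v) < 1/β`; moreover if `u(1-u) + v(1-v) < 1/β` then also
`-1/(4u(1-u)) + β/4 < 0`, so `H` is negative definite (i.e. `-H` is positive definite). -/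
theorem stmt11 (β : ℝ) (hβ : 0 < β) (u v : ℝ)
    (hu : u ∈ Set.Ioo (0:ℝ) 1) (hv : v ∈ Set.Ioo (0:ℝ) 1)
    (H : Matrix (Fin 2) (Fin 2) ℝ)
    (hH : H = !![-(1 / (4 * u * (1 - u))) + β/4, β/4;
                 β/4, -(1 / (4 * v * (1 - v))) + β/4]) :
    (0 < H.det ↔ u * (1 - u) + v * (1 - v) < 1/β) ∧
    (u * (1 - u) + v * (1 - v) < 1/β →
      (-(1 / (4 * u * (1 - u))) + β/4 < 0) ∧ (-H).PosDef) := by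
  obtain ⟨hu0, hu1⟩ := hu
  obtain ⟨hv0, hv1⟩ := hv
  have ha : 0 < u * (1 - u) := mul_pos hu0 (by linarith)
  have hb : 0 < v * (1 - v) := mul_pos hv0 (by linarith)
  set a := u * (1 - u) with hadef
  set b := v * (1 - v) with hbdef
  have hdet : H.det = (1 - β * a - β * b) / (16 * a * b) := by
    rw [hH, Matrix.det_fin_two_of, hadef, hbdef]
    have h1 : u ≠ 0 := hu0.ne'
    have h2 : (1 - u) ≠ 0 := by intro hc; linarith [hc]
    have h3 : v ≠ 0 := hv0.ne'
    have h4 : (1 - v) ≠ 0 := by intro hc; linarith [hc]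
    field_simp
    ring
  constructor
  · rw [hdet]
    rw [div_pos_iff]
    constructor
    · rintro (⟨h1, _⟩ | ⟨_, h2⟩)
      · rw [lt_div_iff₀ hβ]; nlinarith
      · nlinarith
    · intro h
      left
      constructor
      · rw [lt_div_iff₀ hβ] at h; nlinarith
      · positivity
  · intro h
    rw [lt_div_iff₀ hβ] at h
    have h4a : (0:ℝ) < 4 * a := by positivity
    have h4b : (0:ℝ) < 4 * b := by positivity
    have hA : -(1 / (4 * a)) + β/4 < 0 := by
      rw [show -(1 / (4 * a)) + β/4 = (β * a - 1)/(4 * a) by field_simp; ring]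
      exact div_neg_of_neg_of_pos (by nlinarith) h4a
    have hC : -(1 / (4 * b)) + β/4 < 0 := by
      rw [show -(1 / (4 * b)) + β/4 = (β * b - 1)/(4 * b) by field_simp; ring]
      exact div_neg_of_neg_of_pos (by nlinarith) h4b
    refine ⟨by rw [show 4 * u * (1 - u) = 4 * a by ring]; exact hA, Matrix.posDef_iff_dotProduct_mulVec.mpr ⟨?_, ?_⟩⟩
    · rw [hH]
      show _ = _
      ext i j
      fin_cases i <;> fin_cases j <;>
        norm_num [Matrix.conjTranspose_apply, Matrix.neg_apply]
    · intro x hx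
      have hxx : x 0 ≠ 0 ∨ x 1 ≠ 0 := by
        by_contra hc
        push_neg at hc
        exact hx (funext fun i => by fin_cases i <;> simp [hc.1, hc.2])
      have h1 : u ≠ 0 := hu0.ne'
      have h2 : (1 - u) ≠ 0 := by intro hc; linarith [hc]
      have h3 : v ≠ 0 := hv0.ne'
      have h4 : (1 - v) ≠ 0 := by intro hc; linarith [hc]
      have hQ : dotProduct (star x) ((-H).mulVec x) =
          (1 / (4 * a) - β/4) * (x 0)^2 - 2 * (β/4) * (x 0) * (x 1)
            + (1 / (4 * b) - β/4) * (x 1)^2 := by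
        rw [hH, hadef, hbdef]
        simp [dotProduct, Matrix.mulVec, Fin.sum_univ_two]
        field_simp
        ring
      show (0:ℝ) < _
      rw [hQ]
      apply quad_pos_aux _ _ _ _ _ (by linarith) _ hxx
      have e1 : (1 / (4 * a) - β/4) * (1 / (4 * b) - β/4) - (β/4)^2
          = (1 - β * a - β * b) / (16 * a * b) := by
        field_simp
        ring
      rw [e1]
      apply div_pos (by linarith) (by positivity)
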